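/- Let f₁,…,f_s be homogeneous polynomials of degree δ in K[x₁,…,xₙ], let I = ⟨f₁,…,f_s⟩, and for j ∈ {1,…,n} let φ_j(f) denote the polynomial obtained from f by setting x_{j+1} = ⋯ = xₙ = 0. Then for any degree d and any j, the monomials of degree d in K[x₁,…,x_j] outside LM_grevlex(I) coincide with the monomials of degree d in K[x₁,…,x_j] outside LM_grevlex(⟨φ_j(f₁),…,φ_j(f_s)⟩), the latter ideal being taken in K[x₁,…,x_j]. -/

import Mathlib

open MvPolynomial

/-- Total degree of an exponent vector. -/
def expDeg {n : ℕ} (m : Fin n →₀ ℕ) : ℕ := m.sum fun _ e => e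

/-- Graded reverse lexicographic strict order with `x₁ ≻ ⋯ ≻ xₙ`: `a ≺ b` iff
`deg a < deg b`, or the degrees agree and at the last index where they differ `a` has the
larger exponent. -/
def GrevlexLt {n : ℕ} (a b : Fin n →₀ ℕ) : Prop :=
  expDeg a < expDeg b ∨
    (expDeg a = expDeg b ∧ ∃ i : Fin n, b i < a i ∧ ∀ j : Fin n, i < j → a j = b j)

/-- `μ` is the leading monomial of `f` with respect to the strict order `lt`. -/
def IsLM {K : Type*} [Field K] {n : ℕ}
    (lt : (Fin n →₀ ℕ) → (Fin n →₀ ℕ) → Prop)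
    (f : MvPolynomial (Fin n) K) (μ : Fin n →₀ ℕ) : Prop :=
  μ ∈ f.support ∧ ∀ ν ∈ f.support, ν = μ ∨ lt ν μ

/-- The set of leading monomials of nonzero elements of an ideal. -/
def LMset {K : Type*} [Field K] {n : ℕ}
    (lt : (Fin n →₀ ℕ) → (Fin n →₀ ℕ) → Prop)
    (I : Ideal (MvPolynomial (Fin n) K)) : Set (Fin n →₀ ℕ) :=
  {μ | ∃ f ∈ I, IsLM lt f μ}

/-- The truncation `φ_j` setting the variables `x_{j+1},…,xₙ` to `0`, viewed as a map
into `K[x₁,…,x_j]`. -/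
noncomputable def truncMap (K : Type*) [Field K] {n : ℕ} (j : ℕ) (hj : j ≤ n) :
    MvPolynomial (Fin n) K →ₐ[K] MvPolynomial (Fin j) K :=
  MvPolynomial.aeval (fun k : Fin n =>
    if h : (k : ℕ) < j then MvPolynomial.X ⟨(k : ℕ), h⟩ else 0)

section Helpers
variable {K : Type*} [Field K] {n : ℕ} {j : ℕ} (hj : j ≤ n)

local notation "eMap" => Finsupp.mapDomain (α := Fin j) (β := Fin n) (M := ℕ) (Fin.castLE hj)
local notation "φt" => truncMap K j hj
local notation "ψr" => rename (R := K) (Fin.castLE hj)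

lemma e_inj : Function.Injective (eMap) := Finsupp.mapDomain_injective (Fin.castLE_injective hj)

lemma e_apply_lt (a : Fin j →₀ ℕ) (i : Fin j) : (eMap) a (Fin.castLE hj i) = a i :=
  Finsupp.mapDomain_apply (Fin.castLE_injective hj) a i

lemma e_apply_ge (a : Fin j →₀ ℕ) (k : Fin n) (hk : j ≤ (k : ℕ)) : (eMap) a k = 0 := by
  apply Finsupp.mapDomain_notin_range
  rintro ⟨i, rfl⟩
  exact absurd hk (by simp [i.isLt.not_ge])

lemma expDeg_e (a : Fin j →₀ ℕ) : expDeg ((eMap) a) = expDeg a :=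
  Finsupp.sum_mapDomain_index (fun _ => rfl) (fun _ _ _ => rfl)

lemma trunc_comp_psi : (φt).comp (rename (Fin.castLE hj)) = AlgHom.id K _ := by
  apply MvPolynomial.algHom_ext
  intro i
  simp [truncMap, i.isLt]

lemma trunc_psi (p : MvPolynomial (Fin j) K) : (φt) ((ψr) p) = p :=
  AlgHom.congr_fun (trunc_comp_psi hj) p

lemma trunc_monomial_impure (μ : Fin n →₀ ℕ) (c : K) (k : Fin n) (hk : j ≤ (k:ℕ)) (hμ : μ k ≠ 0) :
    (φt) (monomial μ c) = 0 := by
  have h1 : monomial μ c = monomial (Finsupp.erase k μ) c * (X k) ^ (μ k) := by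
    rw [X_pow_eq_monomial, monomial_mul, mul_one, Finsupp.erase_add_single]
  rw [h1, map_mul, map_pow]
  have h2 : (φt) (X k) = 0 := by
    simp [truncMap, Nat.not_lt.mpr hk]
  rw [h2, zero_pow hμ, mul_zero]

lemma trunc_monomial_pure (μ : Fin j →₀ ℕ) (c : K) :
    (φt) (monomial ((eMap) μ) c) = monomial μ c := by
  have : monomial ((eMap) μ) c = (ψr) (monomial μ c) := by rw [rename_monomial]
  rw [this, trunc_psi]

lemma pure_exists (ν : Fin n →₀ ℕ) (hν : ∀ k : Fin n, j ≤ (k:ℕ) → ν k = 0) :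
    ∃ ν' : Fin j →₀ ℕ, (eMap) ν' = ν := by
  refine ⟨Finsupp.comapDomain (Fin.castLE hj) ν ((Fin.castLE_injective hj).injOn), ?_⟩
  ext k
  by_cases h : (k : ℕ) < j
  · have : k = Fin.castLE hj ⟨(k:ℕ), h⟩ := rfl
    rw [this, e_apply_lt, Finsupp.comapDomain_apply]
  · rw [e_apply_ge hj _ k (Nat.not_lt.mp h), hν k (Nat.not_lt.mp h)]

lemma coeff_trunc (F : MvPolynomial (Fin n) K) (m : Fin j →₀ ℕ) :
    coeff m ((φt) F) = coeff ((eMap) m) F := by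
  induction F using MvPolynomial.induction_on' with
  | monomial μ c =>
    by_cases hp : ∀ k : Fin n, j ≤ (k:ℕ) → μ k = 0
    · obtain ⟨μ', rfl⟩ := pure_exists hj μ hp
      rw [trunc_monomial_pure, coeff_monomial, coeff_monomial]
      by_cases h : μ' = m
      · simp [h]
      · rw [if_neg h, if_neg (fun hc => h (e_inj hj hc))]
    · push_neg at hp
      obtain ⟨k, hk, hμ⟩ := hp
      rw [trunc_monomial_impure hj μ c k hk hμ, coeff_zero, coeff_monomial, if_neg]
      rintro rfl
      exact hμ (e_apply_ge hj m k hk)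
  | add p q hp hq => rw [map_add, coeff_add, coeff_add, hp, hq]

lemma grevlex_e_iff (a b : Fin j →₀ ℕ) : GrevlexLt ((eMap) a) ((eMap) b) ↔ GrevlexLt a b := by
  unfold GrevlexLt
  rw [expDeg_e, expDeg_e]
  apply or_congr Iff.rfl
  apply and_congr Iff.rfl
  constructor
  · rintro ⟨i, hlt, hgt⟩
    have hij : (i : ℕ) < j := by
      by_contra h
      rw [e_apply_ge hj a i (Nat.not_lt.mp h), e_apply_ge hj b i (Nat.not_lt.mp h)] at hlt
      exact lt_irrefl 0 hlt
    refine ⟨⟨(i:ℕ), hij⟩, ?_, ?_⟩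
    · have : i = Fin.castLE hj ⟨(i:ℕ), hij⟩ := rfl
      rwa [this, e_apply_lt, e_apply_lt] at hlt
    · intro l hl
      have := hgt (Fin.castLE hj l) (by simpa [Fin.lt_def] using hl)
      rwa [e_apply_lt, e_apply_lt] at this
  · rintro ⟨i, hlt, hgt⟩
    refine ⟨Fin.castLE hj i, by rwa [e_apply_lt, e_apply_lt], ?_⟩
    intro l hl
    by_cases h : (l : ℕ) < j
    · have hle : l = Fin.castLE hj ⟨(l:ℕ), h⟩ := rfl
      rw [hle, e_apply_lt, e_apply_lt]
      exact hgt _ (by simpa [Fin.lt_def] using hl)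
    · rw [e_apply_ge hj a l (Nat.not_lt.mp h), e_apply_ge hj b l (Nat.not_lt.mp h)]

lemma grevlex_impure (m : Fin j →₀ ℕ) (ν : Fin n →₀ ℕ)
    (hdeg : expDeg ν = expDeg ((eMap) m))
    (k : Fin n) (hk : j ≤ (k:ℕ)) (hν : ν k ≠ 0) :
    GrevlexLt ν ((eMap) m) := by
  right
  refine ⟨hdeg, ?_⟩
  set T := ν.support.filter (fun k : Fin n => j ≤ (k:ℕ)) with hT
  have hTne : T.Nonempty := ⟨k, by simp [hT, Finsupp.mem_support_iff, hν, hk]⟩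
  set i := T.max' hTne with hi
  have hiT : i ∈ T := T.max'_mem hTne
  have hiS : ν i ≠ 0 := by
    have := (Finset.mem_filter.mp hiT).1; rwa [Finsupp.mem_support_iff] at this
  have hij : j ≤ (i : ℕ) := (Finset.mem_filter.mp hiT).2
  refine ⟨i, ?_, ?_⟩
  · rw [e_apply_ge hj m i hij]; exact Nat.pos_of_ne_zero hiS
  · intro l hl
    have hlj : j ≤ (l : ℕ) := le_trans hij (Fin.lt_def.mp hl).le
    rw [e_apply_ge hj m l hlj]
    by_contra hne
    have : l ∈ T := Finset.mem_filter.mpr ⟨Finsupp.mem_support_iff.mpr hne, hlj⟩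
    exact absurd (T.le_max' l this) (not_le.mpr hl)

end Helpers

section Homog
variable {K : Type*} [Field K] {n s : ℕ}

attribute [local instance] MvPolynomial.gradedAlgebra

lemma component_mem_span (f : Fin s → MvPolynomial (Fin n) K) (δ : ℕ)
    (hf : ∀ i, (f i).IsHomogeneous δ) (d : ℕ)
    {F : MvPolynomial (Fin n) K} (hF : F ∈ Ideal.span (Set.range f)) :
    homogeneousComponent d F ∈ Ideal.span (Set.range f) := by
  have hspan : Ideal.IsHomogeneous (homogeneousSubmodule (Fin n) K)
      (Ideal.span (Set.range f)) := by
    apply Ideal.homogeneous_span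
    rintro x ⟨i, rfl⟩
    exact ⟨δ, (mem_homogeneousSubmodule _ _).mpr (hf i)⟩
  have := hspan d hF
  rwa [show ((DirectSum.decompose (homogeneousSubmodule (Fin n) K) F d : _) :
      MvPolynomial (Fin n) K) = homogeneousComponent d F from
    MvPolynomial.decomposition.decompose'_apply F d] at this

end Homog

lemma mem_support_component {K : Type*} [Field K] {n : ℕ} {d : ℕ}
    {F : MvPolynomial (Fin n) K} {ν : Fin n →₀ ℕ}
    (hν : ν ∈ (homogeneousComponent d F).support) :
    expDeg ν = d ∧ ν ∈ F.support := by
  rw [MvPolynomial.mem_support_iff, coeff_homogeneousComponent] at hν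
  by_cases h : ν.degree = d
  · exact ⟨h, by rw [if_pos h] at hν; exact MvPolynomial.mem_support_iff.mpr hν⟩
  · rw [if_neg h] at hν; exact absurd rfl hν

lemma coeff_component_of_deg {K : Type*} [Field K] {n : ℕ} {d : ℕ}
    (F : MvPolynomial (Fin n) K) {ν : Fin n →₀ ℕ} (h : expDeg ν = d) :
    coeff ν (homogeneousComponent d F) = coeff ν F := by
  rw [coeff_homogeneousComponent, if_pos (show ν.degree = d from h)]

theorem stmt_7 {K : Type*} [Field K] {n s : ℕ}
    (f : Fin s → MvPolynomial (Fin n) K) (δ : ℕ)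
    (hf : ∀ i, (f i).IsHomogeneous δ)
    (j : ℕ) (hj : j ≤ n) (d : ℕ)
    (m : Fin j →₀ ℕ) (hm : expDeg m = d) :
    Finsupp.mapDomain (Fin.castLE hj) m ∉
        LMset (GrevlexLt (n := n)) (Ideal.span (Set.range f))
      ↔ m ∉ LMset (GrevlexLt (n := j))
          (Ideal.span (Set.range fun i => truncMap K j hj (f i))) := by
  have hmapJ : Ideal.map (truncMap K j hj) (Ideal.span (Set.range f)) =
      Ideal.span (Set.range fun i => truncMap K j hj (f i)) := by
    rw [Ideal.map_span]
    congr 1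
    rw [← Set.range_comp]
    rfl
  have hdeg_em : expDeg (Finsupp.mapDomain (Fin.castLE hj) m) = d := by
    rw [expDeg_e hj, hm]
  apply not_iff_not.mpr
  constructor
  · -- e m ∈ LM(I) → m ∈ LM(J)
    rintro ⟨F, hFI, hFsupp, hFlm⟩
    set Fd := homogeneousComponent d F with hFd
    have hFdI := component_mem_span f δ hf d hFI
    have hem_supp : Finsupp.mapDomain (Fin.castLE hj) m ∈ Fd.support := by
      rw [MvPolynomial.mem_support_iff, hFd, coeff_component_of_deg F hdeg_em]
      exact MvPolynomial.mem_support_iff.mp hFsupp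
    refine ⟨truncMap K j hj Fd, by rw [← hmapJ]; exact Ideal.mem_map_of_mem _ hFdI, ?_, ?_⟩
    · rw [MvPolynomial.mem_support_iff, coeff_trunc hj]
      exact MvPolynomial.mem_support_iff.mp hem_supp
    · intro ν hν
      rw [MvPolynomial.mem_support_iff, coeff_trunc hj] at hν
      have hνFd : Finsupp.mapDomain (Fin.castLE hj) ν ∈ Fd.support :=
        MvPolynomial.mem_support_iff.mpr hν
      obtain ⟨_, hνF⟩ := mem_support_component hνFd
      rcases hFlm _ hνF with h | h
      · exact Or.inl (e_inj hj h)
      · exact Or.inr ((grevlex_e_iff hj ν m).mp h)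
  · -- m ∈ LM(J) → e m ∈ LM(I)
    rintro ⟨g, hgJ, hgsupp, hglm⟩
    obtain ⟨c, hc⟩ := Ideal.mem_span_range_iff_exists_fun.mp hgJ
    set G₀ : MvPolynomial (Fin n) K :=
      ∑ i, (rename (Fin.castLE hj) (c i)) * f i with hG₀
    have hG₀I : G₀ ∈ Ideal.span (Set.range f) := by
      apply Ideal.sum_mem
      intro i _
      exact Ideal.mul_mem_left _ _ (Ideal.subset_span ⟨i, rfl⟩)
    have hφG₀ : truncMap K j hj G₀ = g := by
      rw [hG₀, map_sum, ← hc]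
      refine Finset.sum_congr rfl fun i _ => ?_
      rw [map_mul, trunc_psi hj]
    set G := homogeneousComponent d G₀ with hG
    have hGI := component_mem_span f δ hf d hG₀I
    have hcoe : ∀ ν' : Fin j →₀ ℕ, expDeg ν' = d →
        coeff (Finsupp.mapDomain (Fin.castLE hj) ν') G = coeff ν' g := by
      intro ν' hν'
      rw [hG, coeff_component_of_deg G₀ (by rw [expDeg_e hj, hν']),
        ← coeff_trunc hj, hφG₀]
    refine ⟨G, hGI, ?_, ?_⟩
    · rw [MvPolynomial.mem_support_iff, hcoe m hm]
      exact MvPolynomial.mem_support_iff.mp hgsupp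
    · intro ν hν
      obtain ⟨hνd, _⟩ := mem_support_component (hG ▸ hν)
      by_cases hp : ∀ k : Fin n, j ≤ (k:ℕ) → ν k = 0
      · obtain ⟨ν', rfl⟩ := pure_exists hj ν hp
        have hν'd : expDeg ν' = d := by rwa [expDeg_e hj] at hνd
        have : ν' ∈ g.support := by
          rw [MvPolynomial.mem_support_iff, ← hcoe ν' hν'd]
          exact MvPolynomial.mem_support_iff.mp hν
        rcases hglm ν' this with h | h
        · exact Or.inl (by rw [h])
        · exact Or.inr ((grevlex_e_iff hj ν' m).mpr h)
      · push_neg at hp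
        obtain ⟨k, hk, hνk⟩ := hp
        exact Or.inr (grevlex_impure hj m ν (by rw [hνd, hdeg_em]) k hk hνk)
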